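/- Suppose 0 → X → Y → Z → 0 is a short exact sequence of cochain complexes over A such that 0 → F X → F Y → F Z → 0 is degreewise split (split short exact as a sequence of complexes after applying F). Then the natural quasi-isomorphism φ : cone(f) → Z (where f : X → Y) has F-split contractible cone; explicitly, F cone(φ) is contractible via the homotopy built from the splitting maps, so X → Y → Z → X[1] is a distinguished triangle in D_F(A). -/

import Mathlib

open CategoryTheory Limits CochainComplex HomComplex

section Aux

variable {B : Type*} [Category B] [Abelian B]

lemma aux_comp_left {P Q S' U V : B} (i : P ⟶ Q) (a : Q ⟶ P) (x : P ⟶ U) (b : Q ⟶ S')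
    (y : S' ⟶ U) (d : U ⟶ V) (ha : i ≫ a = 𝟙 _) (hb : i ≫ b = 0) :
    i ≫ (a ≫ x + b ≫ y) ≫ d = x ≫ d := by
  rw [Preadditive.add_comp, Preadditive.comp_add, Category.assoc, Category.assoc,
    reassoc_of% ha, reassoc_of% hb, zero_comp, add_zero]

lemma aux_comp_right {P Q R U V : B} (i : P ⟶ Q) (a : Q ⟶ R) (x : R ⟶ U) (b : Q ⟶ P)
    (y : P ⟶ U) (d : U ⟶ V) (ha : i ≫ a = 0) (hb : i ≫ b = 𝟙 _) :
    i ≫ (a ≫ x + b ≫ y) ≫ d = y ≫ d := by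
  rw [Preadditive.add_comp, Preadditive.comp_add, Category.assoc, Category.assoc,
    reassoc_of% ha, reassoc_of% hb, zero_comp, zero_add]

/-- If `T` is a short complex of cochain complexes equipped with a splitting (by chain maps),
then the canonical map `mappingCone T.f ⟶ T.X₃` is a homotopy equivalence. -/
noncomputable def descHomotopyEquivOfSplitting (T : ShortComplex (CochainComplex B ℤ))
    (σ : T.Splitting) :
    HomotopyEquiv (CochainComplex.mappingCone T.f) T.X₃ where
  hom := CochainComplex.mappingCone.descShortComplex T
  inv := σ.s ≫ CochainComplex.mappingCone.inr T.f
  homotopyHomInvId := by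
    refine CochainComplex.mappingCone.descHomotopy T.f _ _ 0
      (-(Cochain.ofHom σ.r).comp (CochainComplex.mappingCone.inl T.f) (zero_add (-1))) ?_ ?_
    · ext p q hpq
      simp only [Int.reduceNeg, Cochain.ofHom_comp, Cochain.comp_zero_cochain_v, Cochain.ofHom_v,
        mappingCone.inl_v_descShortComplex_f_assoc, zero_comp, δ_zero, Cochain.comp_neg, zero_add,
        Cochain.comp_id, Cochain.add_v, Cochain.neg_v, Cochain.zero_cochain_comp_v]
      have h := congr_arg (fun ξ => HomologicalComplex.Hom.f ξ p) σ.f_r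
      simp only [HomologicalComplex.comp_f, HomologicalComplex.id_f] at h
      rw [← Category.assoc, h, Category.id_comp, neg_add_cancel]
    · ext p
      simp only [mappingCone.inr_descShortComplex_assoc, Cochain.ofHom_comp,
        Cochain.comp_zero_cochain_v, Cochain.ofHom_v, Int.reduceNeg, δ_neg, δ_ofHom_comp,
        mappingCone.δ_inl, Category.comp_id, Cochain.add_v, Cochain.neg_v]
      have h := congr_arg (fun ξ => HomologicalComplex.Hom.f ξ p) σ.id
      simp only [HomologicalComplex.comp_f, HomologicalComplex.add_f_apply,
        HomologicalComplex.id_f] at h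
      have h' : T.g.f p ≫ σ.s.f p = 𝟙 _ - σ.r.f p ≫ T.f.f p := by
        rw [eq_sub_iff_add_eq, add_comm]; exact h
      rw [← Category.assoc, h', Preadditive.sub_comp, Category.id_comp, Category.assoc,
        sub_eq_neg_add]
  homotopyInvHomId := Homotopy.ofEq (by
    rw [Category.assoc, CochainComplex.mappingCone.inr_descShortComplex]
    exact σ.s_g)

end Aux


/-- A complex is `F`-split acyclic if its image under `F` is contractible. -/
def FSplitContractible {A B : Type*} [Category A] [Category B] [Abelian A] [Abelian B]
    (F : A ⥤ B) [F.Additive] (S : CochainComplex A ℤ) : Prop :=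
  Nonempty (Homotopy (𝟙 ((F.mapHomologicalComplex (ComplexShape.up ℤ)).obj S)) 0)

/-- Given a short exact sequence of cochain complexes `0 ⟶ X ⟶ Y ⟶ Z ⟶ 0` whose image
under `F` is a split short exact sequence of complexes, the canonical quasi-isomorphism
`φ : cone(f) ⟶ Z` (with components `(0, g)`) has `F`-split contractible mapping cone;
hence `X ⟶ Y ⟶ Z ⟶ X[1]` is a distinguished triangle in `D_F(A)`. -/
theorem stmt_18 {A B : Type*} [Category A] [Category B] [Abelian A] [Abelian B]
    (F : A ⥤ B) [F.Additive] [PreservesFiniteLimits F] [PreservesFiniteColimits F]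
    (S : ShortComplex (CochainComplex A ℤ))
    (hS : S.ShortExact)
    (hsplit : Nonempty ((S.map (F.mapHomologicalComplex (ComplexShape.up ℤ))).Splitting)) :
    FSplitContractible F (CochainComplex.mappingCone
      (CochainComplex.mappingCone.desc S.f (0 : Cochain S.X₁ S.X₃ (-1)) S.g
        (by simp [S.zero]))) := by
  obtain ⟨σ⟩ := hsplit
  let G := F.mapHomologicalComplex (ComplexShape.up ℤ)
  let T := S.map G
  let φ : CochainComplex.mappingCone S.f ⟶ S.X₃ :=
    CochainComplex.mappingCone.desc S.f (0 : Cochain S.X₁ S.X₃ (-1)) S.g (by simp [S.zero])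
  let Q := HomotopyCategory.quotient B (ComplexShape.up ℤ)
  have heq : (CochainComplex.mappingCone.mapHomologicalComplexIso S.f F).inv ≫ G.map φ =
      CochainComplex.mappingCone.descShortComplex T := by
    ext n
    have hinv : (CochainComplex.mappingCone.mapHomologicalComplexXIso' S.f F n (n + 1) rfl).inv =
        (CochainComplex.mappingCone.fst ((F.mapHomologicalComplex (ComplexShape.up ℤ)).map S.f) :
          Cochain (CochainComplex.mappingCone ((F.mapHomologicalComplex (ComplexShape.up ℤ)).map S.f))
            ((F.mapHomologicalComplex (ComplexShape.up ℤ)).obj S.X₁) 1).v n (n + 1) rfl ≫ F.map ((CochainComplex.mappingCone.inl S.f).v (n + 1) n (by omega)) +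
        (CochainComplex.mappingCone.snd ((F.mapHomologicalComplex (ComplexShape.up ℤ)).map S.f)).v n n (add_zero n) ≫
          F.map ((CochainComplex.mappingCone.inr S.f).f n) := rfl
    rw [CochainComplex.mappingCone.ext_from_iff _ (n + 1) n rfl]
    constructor
    · simp only [Functor.mapHomologicalComplex_obj_X, Int.reduceNeg,
        CochainComplex.mappingCone.mapHomologicalComplexIso, HomologicalComplex.comp_f,
        HomologicalComplex.Hom.isoOfComponents_inv_f,
        CochainComplex.mappingCone.mapHomologicalComplexXIso_eq _ F n (n + 1) rfl,
        hinv,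
        Functor.mapHomologicalComplex_map_f, Preadditive.add_comp, Category.assoc,
        Preadditive.comp_add, CochainComplex.mappingCone.inl_v_fst_v_assoc,
        CochainComplex.mappingCone.inl_v_snd_v_assoc, zero_comp, add_zero, G, φ, T]
      have h1 := CochainComplex.mappingCone.inl_v_fst_v ((F.mapHomologicalComplex (ComplexShape.up ℤ)).map S.f) (n + 1) n rfl
      have h2 := CochainComplex.mappingCone.inl_v_snd_v ((F.mapHomologicalComplex (ComplexShape.up ℤ)).map S.f) (n + 1) n (by omega)
      refine (aux_comp_left _ _ _ _ _ _ h1 h2).trans ?_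
      refine (F.map_comp _ _).symm.trans ?_
      rw [CochainComplex.mappingCone.inl_v_desc_f]
      rw [show (0 : Cochain S.X₁ S.X₃ (-1)).v (n + 1) n (by omega) = 0 from rfl, F.map_zero]
      exact (CochainComplex.mappingCone.inl_v_descShortComplex_f
        (S.map (F.mapHomologicalComplex (ComplexShape.up ℤ))) (n + 1) n (by omega)).symm
    · simp only [Functor.mapHomologicalComplex_obj_X,
        CochainComplex.mappingCone.mapHomologicalComplexIso, HomologicalComplex.comp_f,
        HomologicalComplex.Hom.isoOfComponents_inv_f,
        CochainComplex.mappingCone.mapHomologicalComplexXIso_eq _ F n (n + 1) rfl,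
        hinv, Int.reduceNeg,
        Functor.mapHomologicalComplex_map_f, Preadditive.add_comp, Category.assoc,
        Preadditive.comp_add, CochainComplex.mappingCone.inr_f_fst_v_assoc, zero_comp,
        CochainComplex.mappingCone.inr_f_snd_v_assoc, zero_add, G, φ, T]
      have h1 := CochainComplex.mappingCone.inr_f_fst_v ((F.mapHomologicalComplex (ComplexShape.up ℤ)).map S.f) n (n + 1) rfl
      have h2 := CochainComplex.mappingCone.inr_f_snd_v ((F.mapHomologicalComplex (ComplexShape.up ℤ)).map S.f) n
      refine (aux_comp_right _ _ _ _ _ _ h1 h2).trans ?_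
      refine (F.map_comp _ _).symm.trans ?_
      rw [CochainComplex.mappingCone.inr_f_desc_f]
      exact (CochainComplex.mappingCone.inr_f_descShortComplex_f
        (S.map (F.mapHomologicalComplex (ComplexShape.up ℤ))) n).symm
  have hiso : IsIso (Q.map (G.map φ)) := by
    have h2 : G.map φ =
        (CochainComplex.mappingCone.mapHomologicalComplexIso S.f F).hom ≫
          CochainComplex.mappingCone.descShortComplex T := by
      rw [← heq]; exact (Iso.hom_inv_id_assoc _ _).symm
    rw [h2]; erw [Functor.map_comp]
    have i2 : IsIso (Q.map (CochainComplex.mappingCone.descShortComplex T)) := by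
      change IsIso (HomotopyCategory.isoOfHomotopyEquiv (descHomotopyEquivOfSplitting T σ)).hom
      infer_instance
    exact @IsIso.comp_isIso _ _ _ _ _ _ _ inferInstance i2
  have hz : IsZero (Q.obj (CochainComplex.mappingCone (G.map φ))) :=
    Pretriangulated.Triangle.isZero₃_of_isIso₁ _
      (HomotopyCategory.mappingCone_triangleh_distinguished (G.map φ)) hiso
  have hz' : IsZero (Q.obj (G.obj (CochainComplex.mappingCone φ))) :=
    hz.of_iso (Q.mapIso (CochainComplex.mappingCone.mapHomologicalComplexIso φ F))
  exact (HomotopyCategory.isZero_quotient_obj_iff _).1 hz'
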